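/- arXiv:1405.0025 — 7 statements merged into one kernel-verified Lean document; each statement's English description precedes it below -/
import Mathlib

section
/- Let n ≥ 2, let g₀, g₁, g₂, g₃ be complex n×n matrices, and let s = (s₀,s₁,s₂,s₃) be nonnegative integers with s₀+s₁+s₂+s₃ = n−2. Then the Ptolemy relation holds: c_{s+(1,0,0,1)}·c_{s+(0,1,1,0)} − c_{s+(1,0,1,0)}·c_{s+(0,1,0,1)} + c_{s+(1,1,0,0)}·c_{s+(0,0,1,1)} = 0, where c_t = c_t(g₀,g₁,g₂,g₃) and the sums s+(…) are componentwise. -/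
/-- The matrix obtained by concatenating, in order, the first `t0` columns of `g0`,
the first `t1` columns of `g1`, the first `t2` columns of `g2`, and the remaining
columns of `g3` (when `t0 + t1 + t2 + t3 = n`, these are the first `t3` columns of `g3`). -/
noncomputable def ptolemyMatrix {n : ℕ} (t0 t1 t2 : ℕ)
    (g0 g1 g2 g3 : Matrix (Fin n) (Fin n) ℂ) : Matrix (Fin n) (Fin n) ℂ :=
  Matrix.of fun i j =>
    if (j : ℕ) < t0 then g0 i ⟨(j : ℕ), j.isLt⟩
    else if (j : ℕ) < t0 + t1 then
      g1 i ⟨(j : ℕ) - t0, lt_of_le_of_lt (Nat.sub_le _ _) j.isLt⟩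
    else if (j : ℕ) < t0 + t1 + t2 then
      g2 i ⟨(j : ℕ) - (t0 + t1), lt_of_le_of_lt (Nat.sub_le _ _) j.isLt⟩
    else
      g3 i ⟨(j : ℕ) - (t0 + t1 + t2), lt_of_le_of_lt (Nat.sub_le _ _) j.isLt⟩

/-- The Ptolemy coordinate `c_t(g0,g1,g2,g3)` for `t = (t0,t1,t2,t3)` with
`t0 + t1 + t2 + t3 = n`: the determinant of the concatenation of the first `t0`
columns of `g0`, the first `t1` columns of `g1`, the first `t2` columns of `g2`
and the first `t3` columns of `g3`. -/
noncomputable def ptolemyCoord {n : ℕ} (t0 t1 t2 t3 : ℕ)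
    (g0 g1 g2 g3 : Matrix (Fin n) (Fin n) ℂ) : ℂ :=
  (ptolemyMatrix t0 t1 t2 g0 g1 g2 g3).det


open Matrix

lemma neg_one_pow_congr' {x y : ℕ} (h : x % 2 = y % 2) : ((-1:ℂ))^x = (-1)^y := by
  rw [← Nat.div_add_mod x 2, ← Nat.div_add_mod y 2, h, pow_add, pow_add,
    pow_mul, pow_mul, neg_one_sq, one_pow, one_pow]

/-- The cycle `(n-1, n-2, ..., p)`: sends `p ↦ n-1` and `j ↦ j-1` for `j > p`. -/
def myTau {n : ℕ} (p : Fin n) : Equiv.Perm (Fin n) :=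
  Fin.revPerm * Fin.cycleRange p.rev * Fin.revPerm

lemma myTau_apply {n : ℕ} (p j : Fin n) :
    ((myTau p j : Fin n) : ℕ) =
      if (j:ℕ) < p then (j:ℕ) else if (j:ℕ) = (p:ℕ) then n-1 else (j:ℕ) - 1 := by
  rcases n with _ | m
  · exact j.elim0
  have hj := j.isLt
  have hp := p.isLt
  have h1 : myTau p j = Fin.rev (Fin.cycleRange p.rev (Fin.rev j)) := rfl
  rw [h1, Fin.val_rev]
  split_ifs with h2 h3
  · rw [Fin.cycleRange_of_gt (Fin.rev_lt_rev.mpr (Fin.lt_def.mpr h2)), Fin.val_rev]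
    omega
  · have h4 : Fin.rev j = Fin.rev p := by
      apply Fin.ext; rw [Fin.val_rev, Fin.val_rev]; omega
    rw [Fin.cycleRange_of_eq h4]
    simp only [Fin.val_zero]
  · rw [Fin.coe_cycleRange_of_lt (Fin.rev_lt_rev.mpr (Fin.lt_def.mpr (by omega))), Fin.val_rev]
    omega

lemma myTau_sign {n : ℕ} (p : Fin n) :
    Equiv.Perm.sign (myTau p) = (-1)^(n - 1 - (p:ℕ)) := by
  have : Equiv.Perm.sign (myTau p) = Equiv.Perm.sign (Fin.cycleRange p.rev) := by
    simp only [myTau, _root_.map_mul]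
    rw [mul_comm (Equiv.Perm.sign (Fin.revPerm : Equiv.Perm (Fin n))), mul_assoc,
      Int.units_mul_self, mul_one]
  rw [this, Fin.sign_cycleRange, Fin.val_rev]
  congr 1
  omega

lemma det_move_col {n : ℕ} (M : Matrix (Fin n) (Fin n) ℂ) (p : Fin n) :
    (M.submatrix id (myTau p)).det = (-1)^(n - 1 - (p:ℕ)) * M.det := by
  rw [Matrix.det_permute', myTau_sign]
  norm_num

lemma sylvester {n : ℕ} (u : Fin (n+1) → Fin n → ℂ) (L : (Fin n → ℂ) →ₗ[ℂ] ℂ) :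
    ∑ i : Fin (n+1), (-1:ℂ)^(i:ℕ) * L (u i) *
      (Matrix.of fun r k => u (i.succAbove k) r).det = 0 := by
  set N : Matrix (Fin (n+1)) (Fin (n+1)) ℂ :=
    Matrix.of fun i j => Fin.cases (L (u j)) (fun r => u j r) i with hN
  have h1 : N.det = ∑ i : Fin (n+1), (-1:ℂ)^(i:ℕ) * L (u i) *
      (Matrix.of fun r k => u (i.succAbove k) r).det := by
    rw [Matrix.det_succ_row_zero]
    refine Finset.sum_congr rfl fun j _ => ?_
    have e1 : N 0 j = L (u j) := by simp [hN]
    have e2 : (N.submatrix Fin.succ j.succAbove) =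
        (Matrix.of fun r k => u (j.succAbove k) r) := by
      ext r k
      simp [hN]
    rw [e1, e2]
  set c : Fin (n+1) → ℂ :=
    Fin.cases 0 (fun r => L (fun j => if r = j then 1 else 0)) with hc
  have hc0 : c 0 = 0 := by simp [hc]
  have hrow : (∑ i, c i • N i) = N 0 := by
    ext j
    rw [Finset.sum_apply, Fin.sum_univ_succ]
    have e1 : N 0 j = L (u j) := by simp [hN]
    rw [e1, LinearMap.pi_apply_eq_sum_univ L (u j)]
    rw [hc0]
    simp only [Pi.smul_apply, smul_eq_mul, zero_mul, zero_add]
    refine Finset.sum_congr rfl fun r _ => ?_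
    have e2 : c r.succ = L (fun j => if r = j then 1 else 0) := by simp [hc]
    have e3 : N r.succ j = u j r := by simp [hN]
    rw [e2, e3]; exact mul_comm _ _
  have h2 : N.det = 0 := by
    have h3 := Matrix.det_updateRow_sum N 0 c
    rw [hrow, Matrix.updateRow_eq_self, hc0, zero_smul] at h3
    exact h3
  rw [← h1, h2]

lemma cellc {n : ℕ} (g : Matrix (Fin n) (Fin n) ℂ) (r : Fin n) {x y : ℕ} {hx : x < n}
    {hy : y < n} (h : x = y) : g r ⟨x, hx⟩ = g r ⟨y, hy⟩ := by subst h; rfl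

lemma succAbove_mk_val {n : ℕ} (i : Fin (n+1)) (k : Fin n) :
    ((i.succAbove k : Fin (n+1)) : ℕ) = if (k:ℕ) < (i:ℕ) then (k:ℕ) else (k:ℕ)+1 := by
  rcases lt_or_ge ((k:ℕ)) ((i:ℕ)) with h | h
  · rw [if_pos h, Fin.succAbove_of_castSucc_lt _ _ (by simpa [Fin.lt_def] using h)]
    simp
  · rw [if_neg (not_lt.mpr h), Fin.succAbove_of_le_castSucc _ _ (by simpa [Fin.le_def] using h)]
    simp

/-- The interleaved list of `n+1` column vectors:
`g0` cols `0..s0`, `g1` cols `0..s1`, `g2` cols `0..s2`, `g3` cols `0..s3-1`. -/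
def uCol (n s0 s1 s2 : ℕ) (g0 g1 g2 g3 : Matrix (Fin n) (Fin n) ℂ)
    (h : s0 + s1 + s2 + 2 ≤ n) (i : Fin (n+1)) (r : Fin n) : ℂ :=
  if h1 : (i:ℕ) ≤ s0 then g0 r ⟨(i:ℕ), by omega⟩
  else if (i:ℕ) ≤ s0 + s1 + 1 then g1 r ⟨(i:ℕ) - (s0+1), by omega⟩
  else if (i:ℕ) ≤ s0 + s1 + s2 + 2 then g2 r ⟨(i:ℕ) - (s0+s1+2), by omega⟩
  else g3 r ⟨(i:ℕ) - (s0+s1+s2+3), by omega⟩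

/-- Base matrix: columns `g0` cols `0..s0-1`, `g1` cols `0..s1-1`, `g2` cols `0..s2-1`,
then `g3` columns, with the last two columns both equal to `g3` col `n-2-(s0+s1+s2)`. -/
def mB (n s0 s1 s2 : ℕ) (g0 g1 g2 g3 : Matrix (Fin n) (Fin n) ℂ) :
    Matrix (Fin n) (Fin n) ℂ :=
  Matrix.of fun r j =>
    if (j:ℕ) < s0 then g0 r ⟨(j:ℕ), j.isLt⟩
    else if (j:ℕ) < s0 + s1 then g1 r ⟨(j:ℕ) - s0, by omega⟩
    else if (j:ℕ) < s0 + s1 + s2 then g2 r ⟨(j:ℕ) - (s0+s1), by omega⟩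
    else g3 r ⟨min (j:ℕ) (n-2) - (s0+s1+s2), by omega⟩

lemma minor_a {n s0 s1 s2 : ℕ} (g0 g1 g2 g3 : Matrix (Fin n) (Fin n) ℂ)
    (h : s0+s1+s2+2 ≤ n) (i : Fin (n+1)) (hi : (i:ℕ) = s0) :
    (Matrix.of fun r k => uCol n s0 s1 s2 g0 g1 g2 g3 h (i.succAbove k) r) =
      ptolemyMatrix s0 (s1+1) (s2+1) g0 g1 g2 g3 := by
  ext r k
  rcases lt_or_ge ((k:ℕ)) ((i:ℕ)) with hk | hk
  · have hsa : i.succAbove k = ⟨(k:ℕ), by omega⟩ :=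
      Fin.ext (by rw [succAbove_mk_val, if_pos hk])
    rw [Matrix.of_apply, hsa]
    simp only [uCol, ptolemyMatrix, Matrix.of_apply]
    split_ifs <;> first | rfl | (exfalso; omega) | (exact cellc _ _ (by omega))
  · have hsa : i.succAbove k = ⟨(k:ℕ)+1, by omega⟩ :=
      Fin.ext (by rw [succAbove_mk_val, if_neg (not_lt.mpr hk)])
    rw [Matrix.of_apply, hsa]
    simp only [uCol, ptolemyMatrix, Matrix.of_apply]
    split_ifs <;> first | rfl | (exfalso; omega) | (exact cellc _ _ (by omega))

lemma minor_b {n s0 s1 s2 : ℕ} (g0 g1 g2 g3 : Matrix (Fin n) (Fin n) ℂ)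
    (h : s0+s1+s2+2 ≤ n) (i : Fin (n+1)) (hi : (i:ℕ) = s0+s1+1) :
    (Matrix.of fun r k => uCol n s0 s1 s2 g0 g1 g2 g3 h (i.succAbove k) r) =
      ptolemyMatrix (s0+1) s1 (s2+1) g0 g1 g2 g3 := by
  ext r k
  rcases lt_or_ge ((k:ℕ)) ((i:ℕ)) with hk | hk
  · have hsa : i.succAbove k = ⟨(k:ℕ), by omega⟩ :=
      Fin.ext (by rw [succAbove_mk_val, if_pos hk])
    rw [Matrix.of_apply, hsa]
    simp only [uCol, ptolemyMatrix, Matrix.of_apply]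
    split_ifs <;> first | rfl | (exfalso; omega) | (exact cellc _ _ (by omega))
  · have hsa : i.succAbove k = ⟨(k:ℕ)+1, by omega⟩ :=
      Fin.ext (by rw [succAbove_mk_val, if_neg (not_lt.mpr hk)])
    rw [Matrix.of_apply, hsa]
    simp only [uCol, ptolemyMatrix, Matrix.of_apply]
    split_ifs <;> first | rfl | (exfalso; omega) | (exact cellc _ _ (by omega))

lemma minor_c {n s0 s1 s2 : ℕ} (g0 g1 g2 g3 : Matrix (Fin n) (Fin n) ℂ)
    (h : s0+s1+s2+2 ≤ n) (i : Fin (n+1)) (hi : (i:ℕ) = s0+s1+s2+2) :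
    (Matrix.of fun r k => uCol n s0 s1 s2 g0 g1 g2 g3 h (i.succAbove k) r) =
      ptolemyMatrix (s0+1) (s1+1) s2 g0 g1 g2 g3 := by
  ext r k
  rcases lt_or_ge ((k:ℕ)) ((i:ℕ)) with hk | hk
  · have hsa : i.succAbove k = ⟨(k:ℕ), by omega⟩ :=
      Fin.ext (by rw [succAbove_mk_val, if_pos hk])
    rw [Matrix.of_apply, hsa]
    simp only [uCol, ptolemyMatrix, Matrix.of_apply]
    split_ifs <;> first | rfl | (exfalso; omega) | (exact cellc _ _ (by omega))
  · have hsa : i.succAbove k = ⟨(k:ℕ)+1, by omega⟩ :=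
      Fin.ext (by rw [succAbove_mk_val, if_neg (not_lt.mpr hk)])
    rw [Matrix.of_apply, hsa]
    simp only [uCol, ptolemyMatrix, Matrix.of_apply]
    split_ifs <;> first | rfl | (exfalso; omega) | (exact cellc _ _ (by omega))

lemma move_a {n s0 s1 s2 s3 : ℕ} (g0 g1 g2 g3 : Matrix (Fin n) (Fin n) ℂ)
    (hn : s0+s1+s2+s3+2 = n) (h : s0+s1+s2+2 ≤ n)
    (i : Fin (n+1)) (hi : (i:ℕ) = s0) (p : Fin n) (hp : (p:ℕ) = s0)
    (q : Fin n) (hq : (q:ℕ) = n-1) :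
    ptolemyMatrix (s0+1) s1 s2 g0 g1 g2 g3 =
      ((mB n s0 s1 s2 g0 g1 g2 g3).updateCol q
        (fun r => uCol n s0 s1 s2 g0 g1 g2 g3 h i r)).submatrix id (myTau p) := by
  ext r j
  have hm := myTau_apply p j
  rcases Nat.lt_trichotomy ((j:ℕ)) ((p:ℕ)) with hj | hj | hj
  · have hmt : myTau p j = ⟨(j:ℕ), j.isLt⟩ := Fin.ext (by rw [hm, if_pos hj])
    rw [Matrix.submatrix_apply, id_eq, hmt, Matrix.updateCol_apply,
      if_neg (by simp only [ne_eq, Fin.ext_iff]; omega)]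
    simp only [ptolemyMatrix, mB, uCol, Matrix.of_apply]
    split_ifs <;> first | rfl | (exfalso; omega) | (exact cellc _ _ (by omega))
  · have hmt : myTau p j = q := Fin.ext (by rw [hm, if_neg (by omega), if_pos (by omega), hq])
    rw [Matrix.submatrix_apply, id_eq, hmt, Matrix.updateCol_apply, if_pos rfl]
    simp only [ptolemyMatrix, mB, uCol, Matrix.of_apply]
    split_ifs <;> first | rfl | (exfalso; omega) | (exact cellc _ _ (by omega))
  · have hmt : myTau p j = ⟨(j:ℕ)-1, by omega⟩ :=
      Fin.ext (by rw [hm, if_neg (by omega), if_neg (by omega)])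
    rw [Matrix.submatrix_apply, id_eq, hmt, Matrix.updateCol_apply,
      if_neg (by simp only [ne_eq, Fin.ext_iff]; omega)]
    simp only [ptolemyMatrix, mB, uCol, Matrix.of_apply]
    split_ifs <;> first | rfl | (exfalso; omega) | (exact cellc _ _ (by omega))

lemma move_b {n s0 s1 s2 s3 : ℕ} (g0 g1 g2 g3 : Matrix (Fin n) (Fin n) ℂ)
    (hn : s0+s1+s2+s3+2 = n) (h : s0+s1+s2+2 ≤ n)
    (i : Fin (n+1)) (hi : (i:ℕ) = s0+s1+1) (p : Fin n) (hp : (p:ℕ) = s0+s1)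
    (q : Fin n) (hq : (q:ℕ) = n-1) :
    ptolemyMatrix s0 (s1+1) s2 g0 g1 g2 g3 =
      ((mB n s0 s1 s2 g0 g1 g2 g3).updateCol q
        (fun r => uCol n s0 s1 s2 g0 g1 g2 g3 h i r)).submatrix id (myTau p) := by
  ext r j
  have hm := myTau_apply p j
  rcases Nat.lt_trichotomy ((j:ℕ)) ((p:ℕ)) with hj | hj | hj
  · have hmt : myTau p j = ⟨(j:ℕ), j.isLt⟩ := Fin.ext (by rw [hm, if_pos hj])
    rw [Matrix.submatrix_apply, id_eq, hmt, Matrix.updateCol_apply,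
      if_neg (by simp only [ne_eq, Fin.ext_iff]; omega)]
    simp only [ptolemyMatrix, mB, uCol, Matrix.of_apply]
    split_ifs <;> first | rfl | (exfalso; omega) | (exact cellc _ _ (by omega))
  · have hmt : myTau p j = q := Fin.ext (by rw [hm, if_neg (by omega), if_pos (by omega), hq])
    rw [Matrix.submatrix_apply, id_eq, hmt, Matrix.updateCol_apply, if_pos rfl]
    simp only [ptolemyMatrix, mB, uCol, Matrix.of_apply]
    split_ifs <;> first | rfl | (exfalso; omega) | (exact cellc _ _ (by omega))
  · have hmt : myTau p j = ⟨(j:ℕ)-1, by omega⟩ :=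
      Fin.ext (by rw [hm, if_neg (by omega), if_neg (by omega)])
    rw [Matrix.submatrix_apply, id_eq, hmt, Matrix.updateCol_apply,
      if_neg (by simp only [ne_eq, Fin.ext_iff]; omega)]
    simp only [ptolemyMatrix, mB, uCol, Matrix.of_apply]
    split_ifs <;> first | rfl | (exfalso; omega) | (exact cellc _ _ (by omega))

lemma move_c {n s0 s1 s2 s3 : ℕ} (g0 g1 g2 g3 : Matrix (Fin n) (Fin n) ℂ)
    (hn : s0+s1+s2+s3+2 = n) (h : s0+s1+s2+2 ≤ n)
    (i : Fin (n+1)) (hi : (i:ℕ) = s0+s1+s2+2) (p : Fin n) (hp : (p:ℕ) = s0+s1+s2)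
    (q : Fin n) (hq : (q:ℕ) = n-1) :
    ptolemyMatrix s0 s1 (s2+1) g0 g1 g2 g3 =
      ((mB n s0 s1 s2 g0 g1 g2 g3).updateCol q
        (fun r => uCol n s0 s1 s2 g0 g1 g2 g3 h i r)).submatrix id (myTau p) := by
  ext r j
  have hm := myTau_apply p j
  rcases Nat.lt_trichotomy ((j:ℕ)) ((p:ℕ)) with hj | hj | hj
  · have hmt : myTau p j = ⟨(j:ℕ), j.isLt⟩ := Fin.ext (by rw [hm, if_pos hj])
    rw [Matrix.submatrix_apply, id_eq, hmt, Matrix.updateCol_apply,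
      if_neg (by simp only [ne_eq, Fin.ext_iff]; omega)]
    simp only [ptolemyMatrix, mB, uCol, Matrix.of_apply]
    split_ifs <;> first | rfl | (exfalso; omega) | (exact cellc _ _ (by omega))
  · have hmt : myTau p j = q := Fin.ext (by rw [hm, if_neg (by omega), if_pos (by omega), hq])
    rw [Matrix.submatrix_apply, id_eq, hmt, Matrix.updateCol_apply, if_pos rfl]
    simp only [ptolemyMatrix, mB, uCol, Matrix.of_apply]
    split_ifs <;> first | rfl | (exfalso; omega) | (exact cellc _ _ (by omega))
  · have hmt : myTau p j = ⟨(j:ℕ)-1, by omega⟩ :=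
      Fin.ext (by rw [hm, if_neg (by omega), if_neg (by omega)])
    rw [Matrix.submatrix_apply, id_eq, hmt, Matrix.updateCol_apply,
      if_neg (by simp only [ne_eq, Fin.ext_iff]; omega)]
    simp only [ptolemyMatrix, mB, uCol, Matrix.of_apply]
    split_ifs <;> first | rfl | (exfalso; omega) | (exact cellc _ _ (by omega))

lemma Lzero {n s0 s1 s2 s3 : ℕ} (g0 g1 g2 g3 : Matrix (Fin n) (Fin n) ℂ)
    (hn : s0+s1+s2+s3+2 = n) (h : s0+s1+s2+2 ≤ n)
    (i : Fin (n+1)) (h0 : (i:ℕ) ≠ s0) (h1 : (i:ℕ) ≠ s0+s1+1) (h2 : (i:ℕ) ≠ s0+s1+s2+2)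
    (q : Fin n) (hq : (q:ℕ) = n-1) :
    ((mB n s0 s1 s2 g0 g1 g2 g3).updateCol q
      (fun r => uCol n s0 s1 s2 g0 g1 g2 g3 h i r)).det = 0 := by
  have hi := i.isLt
  have key : ∀ (v : ℕ) (hv : v < n), v ≠ n-1 →
      (∀ k, mB n s0 s1 s2 g0 g1 g2 g3 k ⟨v, hv⟩ = uCol n s0 s1 s2 g0 g1 g2 g3 h i k) →
      ((mB n s0 s1 s2 g0 g1 g2 g3).updateCol q
        (fun r => uCol n s0 s1 s2 g0 g1 g2 g3 h i r)).det = 0 := by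
    intro v hv hv' hcol
    refine Matrix.det_zero_of_column_eq (i := ⟨v, hv⟩) (j := q)
      (by simp only [ne_eq, Fin.ext_iff]; omega) (fun k => ?_)
    rw [Matrix.updateCol_apply, Matrix.updateCol_apply, if_pos rfl,
      if_neg (by simp only [ne_eq, Fin.ext_iff]; omega)]
    exact hcol k
  by_cases c1 : (i:ℕ) < s0
  · refine key (i:ℕ) (by omega) (by omega) (fun k => ?_)
    simp only [mB, uCol, Matrix.of_apply]
    split_ifs <;> first | rfl | (exfalso; omega) | (exact cellc _ _ (by omega))
  by_cases c2 : (i:ℕ) ≤ s0+s1+1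
  · refine key ((i:ℕ)-1) (by omega) (by omega) (fun k => ?_)
    simp only [mB, uCol, Matrix.of_apply]
    split_ifs <;> first | rfl | (exfalso; omega) | (exact cellc _ _ (by omega))
  by_cases c3 : (i:ℕ) ≤ s0+s1+s2+2
  · refine key ((i:ℕ)-2) (by omega) (by omega) (fun k => ?_)
    simp only [mB, uCol, Matrix.of_apply]
    split_ifs <;> first | rfl | (exfalso; omega) | (exact cellc _ _ (by omega))
  · refine key ((i:ℕ)-3) (by omega) (by omega) (fun k => ?_)
    simp only [mB, uCol, Matrix.of_apply]
    split_ifs <;> first | rfl | (exfalso; omega) | (exact cellc _ _ (by omega))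


/-- the Ptolemy relation (three-term Plücker relation) for the Ptolemy
coordinates of four `n × n` complex matrices, for any `s = (s0,s1,s2,s3)` with
`s0 + s1 + s2 + s3 = n - 2`. -/
theorem ptolemy_relation (n : ℕ) (hn : 2 ≤ n)
    (g0 g1 g2 g3 : Matrix (Fin n) (Fin n) ℂ)
    (s0 s1 s2 s3 : ℕ) (hs : s0 + s1 + s2 + s3 = n - 2) :
    ptolemyCoord (s0 + 1) s1 s2 (s3 + 1) g0 g1 g2 g3 *
        ptolemyCoord s0 (s1 + 1) (s2 + 1) s3 g0 g1 g2 g3 -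
      ptolemyCoord (s0 + 1) s1 (s2 + 1) s3 g0 g1 g2 g3 *
        ptolemyCoord s0 (s1 + 1) s2 (s3 + 1) g0 g1 g2 g3 +
      ptolemyCoord (s0 + 1) (s1 + 1) s2 s3 g0 g1 g2 g3 *
        ptolemyCoord s0 s1 (s2 + 1) (s3 + 1) g0 g1 g2 g3 = 0 := by
  have hn2 : s0+s1+s2+s3+2 = n := by omega
  have h : s0+s1+s2+2 ≤ n := by omega
  set q : Fin n := ⟨n-1, by omega⟩ with hqdef
  set M := mB n s0 s1 s2 g0 g1 g2 g3 with hM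
  set u := uCol n s0 s1 s2 g0 g1 g2 g3 h with hu
  set L : (Fin n → ℂ) →ₗ[ℂ] ℂ := (LinearMap.proj q).comp (Matrix.cramer M) with hL
  have hLapp : ∀ x, L x = (M.updateCol q x).det := by
    intro x
    rw [hL]
    simp [Matrix.cramer_apply]
  have hia : s0 < n+1 := by omega
  have hib : s0+s1+1 < n+1 := by omega
  have hic : s0+s1+s2+2 < n+1 := by omega
  have hsyl := sylvester u L
  have hvan : ∀ i ∈ (Finset.univ : Finset (Fin (n+1))),
      i ∉ ({⟨s0, hia⟩, ⟨s0+s1+1, hib⟩, ⟨s0+s1+s2+2, hic⟩} : Finset (Fin (n+1))) →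
      (-1:ℂ)^(i:ℕ) * L (u i) * (Matrix.of fun r k => u (i.succAbove k) r).det = 0 := by
    intro i _ hmem
    simp only [Finset.mem_insert, Finset.mem_singleton, not_or, Fin.ext_iff] at hmem
    obtain ⟨m1, m2, m3⟩ := hmem
    have hz : L (u i) = 0 := by
      rw [hLapp]
      exact Lzero g0 g1 g2 g3 hn2 h i m1 m2 m3 q rfl
    rw [hz]
    ring
  have hset := Finset.sum_subset
    (Finset.subset_univ ({⟨s0, hia⟩, ⟨s0+s1+1, hib⟩, ⟨s0+s1+s2+2, hic⟩} : Finset (Fin (n+1))))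
    hvan
  rw [hsyl] at hset
  rw [Finset.sum_insert (by simp only [Finset.mem_insert, Finset.mem_singleton, Fin.ext_iff]; omega),
    Finset.sum_insert (by simp only [Finset.mem_singleton, Fin.ext_iff]; omega),
    Finset.sum_singleton] at hset
  rw [minor_a g0 g1 g2 g3 h _ rfl, minor_b g0 g1 g2 g3 h _ rfl,
    minor_c g0 g1 g2 g3 h _ rfl] at hset
  have key : (-1:ℂ)^s0 * L (u ⟨s0, hia⟩) *
        (ptolemyMatrix s0 (s1+1) (s2+1) g0 g1 g2 g3).det
      + ((-1:ℂ)^(s0+s1+1) * L (u ⟨s0+s1+1, hib⟩) *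
        (ptolemyMatrix (s0+1) s1 (s2+1) g0 g1 g2 g3).det
      + (-1:ℂ)^(s0+s1+s2+2) * L (u ⟨s0+s1+s2+2, hic⟩) *
        (ptolemyMatrix (s0+1) (s1+1) s2 g0 g1 g2 g3).det) = 0 := hset
  have hA1 : ptolemyCoord (s0+1) s1 s2 (s3+1) g0 g1 g2 g3 =
      (-1:ℂ)^(s1+s2+s3+1) * L (u ⟨s0, hia⟩) := by
    rw [ptolemyCoord, hLapp,
      move_a g0 g1 g2 g3 hn2 h ⟨s0, hia⟩ rfl ⟨s0, by omega⟩ rfl q rfl, det_move_col]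
    congr 1
    exact neg_one_pow_congr' (show (n - 1 - s0) % 2 = (s1+s2+s3+1) % 2 by omega)
  have hB2 : ptolemyCoord s0 (s1+1) s2 (s3+1) g0 g1 g2 g3 =
      (-1:ℂ)^(s2+s3+1) * L (u ⟨s0+s1+1, hib⟩) := by
    rw [ptolemyCoord, hLapp,
      move_b g0 g1 g2 g3 hn2 h ⟨s0+s1+1, hib⟩ rfl ⟨s0+s1, by omega⟩ rfl q rfl, det_move_col]
    congr 1
    exact neg_one_pow_congr' (show (n - 1 - (s0+s1)) % 2 = (s2+s3+1) % 2 by omega)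
  have hC2 : ptolemyCoord s0 s1 (s2+1) (s3+1) g0 g1 g2 g3 =
      (-1:ℂ)^(s3+1) * L (u ⟨s0+s1+s2+2, hic⟩) := by
    rw [ptolemyCoord, hLapp,
      move_c g0 g1 g2 g3 hn2 h ⟨s0+s1+s2+2, hic⟩ rfl ⟨s0+s1+s2, by omega⟩ rfl q rfl,
      det_move_col]
    congr 1
    exact neg_one_pow_congr' (show (n - 1 - (s0+s1+s2)) % 2 = (s3+1) % 2 by omega)
  rw [hA1, hB2, hC2]
  simp only [ptolemyCoord]
  have p1 : (-1:ℂ)^(s1+s2+s3+1+s0) * (-1:ℂ)^s0 = (-1:ℂ)^(s1+s2+s3+1) := by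
    rw [← pow_add]
    exact neg_one_pow_congr' (by omega)
  have p2 : (-1:ℂ)^(s1+s2+s3+1+s0) * (-1:ℂ)^(s0+s1+1) = -(-1:ℂ)^(s2+s3+1) := by
    rw [← pow_add]
    have e : (-1:ℂ)^(s1+s2+s3+1+s0+(s0+s1+1)) = (-1:ℂ)^(s2+s3+1+1) :=
      neg_one_pow_congr' (by omega)
    rw [e, pow_succ, mul_neg_one]
  have p3 : (-1:ℂ)^(s1+s2+s3+1+s0) * (-1:ℂ)^(s0+s1+s2+2) = (-1:ℂ)^(s3+1) := by
    rw [← pow_add]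
    exact neg_one_pow_congr' (by omega)
  linear_combination ((-1:ℂ)^(s1+s2+s3+1+s0)) * key
    - (L (u ⟨s0, hia⟩) * (ptolemyMatrix s0 (s1+1) (s2+1) g0 g1 g2 g3).det) * p1
    - (L (u ⟨s0+s1+1, hib⟩) * (ptolemyMatrix (s0+1) s1 (s2+1) g0 g1 g2 g3).det) * p2
    - (L (u ⟨s0+s1+s2+2, hic⟩) * (ptolemyMatrix (s0+1) (s1+1) s2 g0 g1 g2 g3).det) * p3
end

section
/- Let n ≥ 1, let g₀, g₁, g₂, g₃ be complex n×n matrices, let u₀, u₁, u₂, u₃ be unipotent upper-triangular n×n matrices, and let t = (t₀,t₁,t₂,t₃) be nonnegative integers with t₀+t₁+t₂+t₃ = n. Then c_t(g₀u₀, g₁u₁, g₂u₂, g₃u₃) = c_t(g₀, g₁, g₂, g₃). In particular, the Ptolemy coordinates depend only on the cosets g₀N, g₁N, g₂N, g₃N, where N is the group of unipotent upper-triangular matrices. -/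
/-- A matrix is unipotent upper-triangular if its diagonal entries are all `1`
and its entries below the diagonal are all `0`. -/
def IsUnipotentUpperTriangular {n : ℕ} (x : Matrix (Fin n) (Fin n) ℂ) : Prop :=
  (∀ i : Fin n, x i i = 1) ∧ ∀ i j : Fin n, j < i → x i j = 0

/-- helper: sum over a block equals a matrix product entry -/
lemma sum_block {n : ℕ} (v : Fin n → ℂ) (u : Matrix (Fin n) (Fin n) ℂ)
    (hu : IsUnipotentUpperTriangular u) (a t : ℕ) (hat : a + t ≤ n)
    (jl : Fin n) (hjl : (jl : ℕ) < t) (f : Fin n → ℂ)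
    (hf : ∀ k : Fin n, a ≤ (k : ℕ) → (k : ℕ) < a + t →
      f k = v ⟨(k : ℕ) - a, lt_of_le_of_lt (Nat.sub_le _ _) k.isLt⟩ *
        u ⟨(k : ℕ) - a, lt_of_le_of_lt (Nat.sub_le _ _) k.isLt⟩ jl)
    (hf0 : ∀ k : Fin n, ¬(a ≤ (k : ℕ) ∧ (k : ℕ) < a + t) → f k = 0) :
    ∑ k, f k = ∑ m, v m * u m jl := by
  have h1 : ∑ k, f k =
      ∑ k ∈ Finset.univ.filter (fun k : Fin n => a ≤ (k : ℕ) ∧ (k : ℕ) < a + t), f k :=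
    (Finset.sum_subset (Finset.filter_subset _ _)
      (fun k _ hk => hf0 k (by simpa using hk))).symm
  have h2 : ∑ m, v m * u m jl =
      ∑ m ∈ Finset.univ.filter (fun m : Fin n => (m : ℕ) < t), v m * u m jl :=
    (Finset.sum_subset (Finset.filter_subset _ _)
      (fun m _ hm => by
        have hm' : t ≤ (m : ℕ) := by simpa using hm
        have : u m jl = 0 := hu.2 m jl (Fin.lt_def.mpr (lt_of_lt_of_le hjl hm'))
        simp [this])).symm
  rw [h1, h2]
  refine Finset.sum_bij'
    (fun k _ => (⟨(k : ℕ) - a, lt_of_le_of_lt (Nat.sub_le _ _) k.isLt⟩ : Fin n))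
    (fun m hm => (⟨(m : ℕ) + a, by
      have : (m : ℕ) < t := by simpa using hm
      omega⟩ : Fin n)) ?_ ?_ ?_ ?_ ?_
  · intro k hk
    have hk' : a ≤ (k : ℕ) ∧ (k : ℕ) < a + t := by simpa using hk
    simp only [Finset.mem_filter, Finset.mem_univ, true_and]
    omega
  · intro m hm
    have hm' : (m : ℕ) < t := by simpa using hm
    simp only [Finset.mem_filter, Finset.mem_univ, true_and]
    omega
  · intro k hk
    have hk' : a ≤ (k : ℕ) ∧ (k : ℕ) < a + t := by simpa using hk
    apply Fin.ext; simp; omega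
  · intro m hm
    apply Fin.ext; simp
  · intro k hk
    have hk' : a ≤ (k : ℕ) ∧ (k : ℕ) < a + t := by simpa using hk
    exact hf k hk'.1 hk'.2

/-- the block-diagonal unipotent matrix built from the four truncations -/
noncomputable def unipBlock {n : ℕ} (t0 t1 t2 : ℕ)
    (u0 u1 u2 u3 : Matrix (Fin n) (Fin n) ℂ) : Matrix (Fin n) (Fin n) ℂ :=
  Matrix.of fun i j =>
    if (j : ℕ) < t0 then
      (if (i : ℕ) < t0 then u0 ⟨(i : ℕ), i.isLt⟩ ⟨(j : ℕ), j.isLt⟩ else 0)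
    else if (j : ℕ) < t0 + t1 then
      (if (i : ℕ) < t0 then 0 else if (i : ℕ) < t0 + t1 then
        u1 ⟨(i : ℕ) - t0, lt_of_le_of_lt (Nat.sub_le _ _) i.isLt⟩
           ⟨(j : ℕ) - t0, lt_of_le_of_lt (Nat.sub_le _ _) j.isLt⟩ else 0)
    else if (j : ℕ) < t0 + t1 + t2 then
      (if (i : ℕ) < t0 + t1 then 0 else if (i : ℕ) < t0 + t1 + t2 then
        u2 ⟨(i : ℕ) - (t0 + t1), lt_of_le_of_lt (Nat.sub_le _ _) i.isLt⟩
           ⟨(j : ℕ) - (t0 + t1), lt_of_le_of_lt (Nat.sub_le _ _) j.isLt⟩ else 0)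
    else
      (if (i : ℕ) < t0 + t1 + t2 then 0 else
        u3 ⟨(i : ℕ) - (t0 + t1 + t2), lt_of_le_of_lt (Nat.sub_le _ _) i.isLt⟩
           ⟨(j : ℕ) - (t0 + t1 + t2), lt_of_le_of_lt (Nat.sub_le _ _) j.isLt⟩)

lemma det_unipBlock {n : ℕ} (t0 t1 t2 : ℕ) (u0 u1 u2 u3 : Matrix (Fin n) (Fin n) ℂ)
    (hu0 : IsUnipotentUpperTriangular u0) (hu1 : IsUnipotentUpperTriangular u1)
    (hu2 : IsUnipotentUpperTriangular u2) (hu3 : IsUnipotentUpperTriangular u3) :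
    (unipBlock t0 t1 t2 u0 u1 u2 u3).det = 1 := by
  have htri : (unipBlock t0 t1 t2 u0 u1 u2 u3).BlockTriangular id := by
    intro i j hij
    have hij' : (j : ℕ) < (i : ℕ) := hij
    simp only [unipBlock, Matrix.of_apply]
    split_ifs <;> first
      | rfl
      | (apply hu0.2; exact Fin.lt_def.mpr (by simp; omega))
      | (apply hu1.2; exact Fin.lt_def.mpr (by simp; omega))
      | (apply hu2.2; exact Fin.lt_def.mpr (by simp; omega))
      | (apply hu3.2; exact Fin.lt_def.mpr (by simp; omega))
      | omega
  rw [Matrix.det_of_upperTriangular htri]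
  apply Finset.prod_eq_one
  intro i _
  simp only [unipBlock, Matrix.of_apply]
  split_ifs <;> first
    | (apply hu0.1) | (apply hu1.1) | (apply hu2.1) | (apply hu3.1) | omega


/-- the Ptolemy coordinates are invariant under right multiplication of
each matrix by a unipotent upper-triangular matrix; i.e. they only depend on the
cosets `g₀N, g₁N, g₂N, g₃N`. -/
theorem ptolemyCoord_unipotent_invariance (n : ℕ) (hn : 1 ≤ n)
    (g0 g1 g2 g3 u0 u1 u2 u3 : Matrix (Fin n) (Fin n) ℂ)
    (hu0 : IsUnipotentUpperTriangular u0) (hu1 : IsUnipotentUpperTriangular u1)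
    (hu2 : IsUnipotentUpperTriangular u2) (hu3 : IsUnipotentUpperTriangular u3)
    (t0 t1 t2 t3 : ℕ) (ht : t0 + t1 + t2 + t3 = n) :
    ptolemyCoord t0 t1 t2 t3 (g0 * u0) (g1 * u1) (g2 * u2) (g3 * u3) =
      ptolemyCoord t0 t1 t2 t3 g0 g1 g2 g3 := by
  have hB : ptolemyMatrix t0 t1 t2 (g0 * u0) (g1 * u1) (g2 * u2) (g3 * u3)
      = ptolemyMatrix t0 t1 t2 g0 g1 g2 g3 * unipBlock t0 t1 t2 u0 u1 u2 u3 := by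
    ext i j
    rw [Matrix.mul_apply]
    by_cases h0 : (j : ℕ) < t0
    · have hL : ptolemyMatrix t0 t1 t2 (g0 * u0) (g1 * u1) (g2 * u2) (g3 * u3) i j
          = (g0 * u0) i ⟨(j : ℕ) - 0, lt_of_le_of_lt (Nat.sub_le _ _) j.isLt⟩ := by
        simp [ptolemyMatrix, h0]
      rw [hL, Matrix.mul_apply]
      refine (sum_block (fun m => g0 i m) u0 hu0 0 t0 (by omega)
        ⟨(j : ℕ) - 0, lt_of_le_of_lt (Nat.sub_le _ _) j.isLt⟩ (by simp; omega) _ ?_ ?_).symm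
      · intro k _ hk2
        simp only [Nat.zero_add] at hk2
        simp [ptolemyMatrix, unipBlock, h0, hk2]
      · intro k hk
        have hk' : ¬ (k : ℕ) < t0 := by omega
        simp [unipBlock, h0, hk']
    · by_cases h1 : (j : ℕ) < t0 + t1
      · have hL : ptolemyMatrix t0 t1 t2 (g0 * u0) (g1 * u1) (g2 * u2) (g3 * u3) i j
            = (g1 * u1) i ⟨(j : ℕ) - t0, lt_of_le_of_lt (Nat.sub_le _ _) j.isLt⟩ := by
          simp [ptolemyMatrix, h0, h1]
        rw [hL, Matrix.mul_apply]
        refine (sum_block (fun m => g1 i m) u1 hu1 t0 t1 (by omega)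
          ⟨(j : ℕ) - t0, lt_of_le_of_lt (Nat.sub_le _ _) j.isLt⟩ (by simp; omega) _ ?_ ?_).symm
        · intro k hk1 hk2
          have hk1' : ¬ (k : ℕ) < t0 := by omega
          simp [ptolemyMatrix, unipBlock, h0, h1, hk1', hk2]
        · intro k hk
          rcases Nat.lt_or_ge (k : ℕ) t0 with h | h
          · simp [unipBlock, h0, h1, h]
          · have hk' : ¬ (k : ℕ) < t0 := by omega
            have hk'' : ¬ (k : ℕ) < t0 + t1 := by omega
            simp [unipBlock, h0, h1, hk', hk'']
      · by_cases h2 : (j : ℕ) < t0 + t1 + t2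
        · have hL : ptolemyMatrix t0 t1 t2 (g0 * u0) (g1 * u1) (g2 * u2) (g3 * u3) i j
              = (g2 * u2) i ⟨(j : ℕ) - (t0 + t1), lt_of_le_of_lt (Nat.sub_le _ _) j.isLt⟩ := by
            simp [ptolemyMatrix, h0, h1, h2]
          rw [hL, Matrix.mul_apply]
          refine (sum_block (fun m => g2 i m) u2 hu2 (t0 + t1) t2 (by omega)
            ⟨(j : ℕ) - (t0 + t1), lt_of_le_of_lt (Nat.sub_le _ _) j.isLt⟩ (by simp; omega) _ ?_ ?_).symm
          · intro k hk1 hk2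
            have hk0 : ¬ (k : ℕ) < t0 := by omega
            have hk1' : ¬ (k : ℕ) < t0 + t1 := by omega
            simp [ptolemyMatrix, unipBlock, h0, h1, h2, hk0, hk1', hk2]
          · intro k hk
            rcases Nat.lt_or_ge (k : ℕ) (t0 + t1) with h | h
            · simp [unipBlock, h0, h1, h2, h]
            · have hk' : ¬ (k : ℕ) < t0 + t1 := by omega
              have hk'' : ¬ (k : ℕ) < t0 + t1 + t2 := by omega
              simp [unipBlock, h0, h1, h2, hk', hk'']
        · have hL : ptolemyMatrix t0 t1 t2 (g0 * u0) (g1 * u1) (g2 * u2) (g3 * u3) i j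
              = (g3 * u3) i ⟨(j : ℕ) - (t0 + t1 + t2), lt_of_le_of_lt (Nat.sub_le _ _) j.isLt⟩ := by
            simp [ptolemyMatrix, h0, h1, h2]
          rw [hL, Matrix.mul_apply]
          have hjn : (j : ℕ) < n := j.isLt
          refine (sum_block (fun m => g3 i m) u3 hu3 (t0 + t1 + t2) t3 (by omega)
            ⟨(j : ℕ) - (t0 + t1 + t2), lt_of_le_of_lt (Nat.sub_le _ _) j.isLt⟩ (by simp; omega) _ ?_ ?_).symm
          · intro k hk1 hk2
            have hk0 : ¬ (k : ℕ) < t0 := by omega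
            have hk1' : ¬ (k : ℕ) < t0 + t1 := by omega
            have hk2' : ¬ (k : ℕ) < t0 + t1 + t2 := by omega
            simp [ptolemyMatrix, unipBlock, h0, h1, h2, hk0, hk1', hk2']
          · intro k hk
            have hkn : (k : ℕ) < n := k.isLt
            have h : (k : ℕ) < t0 + t1 + t2 := by omega
            simp [unipBlock, h0, h1, h2, h]
  unfold ptolemyCoord
  rw [hB, Matrix.det_mul, det_unipBlock t0 t1 t2 u0 u1 u2 u3 hu0 hu1 hu2 hu3, mul_one]
end

section
/- Let x, y ∈ ℂ with x ∉ {0,1}, y ∉ {0,1}, and x ≠ y. Then in ⋀²_ℤ(ℂˣ): x∧(1−x) − y∧(1−y) + (y/x)∧(1−y/x) − ((1−x⁻¹)/(1−y⁻¹))∧(1−(1−x⁻¹)/(1−y⁻¹)) + ((1−x)/(1−y))∧(1−(1−x)/(1−y)) = 0. That is, the Dehn invariant map ν(z) = z∧(1−z) vanishes on the five-term relation, and hence is well defined on the pre-Bloch group 𝒫(ℂ). -/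
/-- The elementary wedge `a ∧ b` of two nonzero complex numbers in the second exterior
power `⋀²_ℤ(ℂˣ)` of the multiplicative group `ℂˣ` (viewed additively), extended by `0`
when one of the arguments vanishes. -/
noncomputable def cwedge (a b : ℂ) : ⋀[ℤ]^2 (Additive ℂˣ) :=
  if h : a ≠ 0 ∧ b ≠ 0 then
    ⟨ExteriorAlgebra.ιMulti ℤ 2
        ![Additive.ofMul (Units.mk0 a h.1), Additive.ofMul (Units.mk0 b h.2)],
      ExteriorAlgebra.ιMulti_range ℤ 2 ⟨_, rfl⟩⟩
  else 0

/-- The Dehn invariant `ν(z) = z ∧ (1 - z) ∈ ⋀²_ℤ(ℂˣ)` of a shape parameter `z`. -/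
noncomputable def dehnNu (z : ℂ) : ⋀[ℤ]^2 (Additive ℂˣ) :=
  cwedge z (1 - z)

/-- The image of a unit under `ι` in the exterior algebra. -/
noncomputable def gu (a : ℂˣ) : ExteriorAlgebra ℤ (Additive ℂˣ) :=
  ExteriorAlgebra.ι ℤ (Additive.ofMul a)

lemma gu_mul (a b : ℂˣ) : gu (a * b) = gu a + gu b := by
  simp [gu]

lemma cwedge_val (a b : ℂ) (ha : a ≠ 0) (hb : b ≠ 0) :
    (cwedge a b : ExteriorAlgebra ℤ (Additive ℂˣ)) = gu (Units.mk0 a ha) * gu (Units.mk0 b hb) := by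
  rw [cwedge, dif_pos ⟨ha, hb⟩]
  simp [ExteriorAlgebra.ιMulti_apply, List.ofFn, gu]

lemma cwedge_mul_left {a b c : ℂ} (ha : a ≠ 0) (hb : b ≠ 0) (hc : c ≠ 0) :
    cwedge (a * b) c = cwedge a c + cwedge b c := by
  apply Subtype.ext
  push_cast [cwedge_val _ _ (mul_ne_zero ha hb) hc, cwedge_val _ _ ha hc,
    cwedge_val _ _ hb hc]
  rw [show Units.mk0 (a*b) (mul_ne_zero ha hb) = Units.mk0 a ha * Units.mk0 b hb from
    Units.ext rfl, gu_mul, add_mul]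

lemma cwedge_mul_right {a b c : ℂ} (ha : a ≠ 0) (hb : b ≠ 0) (hc : c ≠ 0) :
    cwedge a (b * c) = cwedge a b + cwedge a c := by
  apply Subtype.ext
  push_cast [cwedge_val _ _ ha (mul_ne_zero hb hc), cwedge_val _ _ ha hb,
    cwedge_val _ _ ha hc]
  rw [show Units.mk0 (b*c) (mul_ne_zero hb hc) = Units.mk0 b hb * Units.mk0 c hc from
    Units.ext rfl, gu_mul, mul_add]

lemma cwedge_self {a : ℂ} (ha : a ≠ 0) : cwedge a a = 0 := by
  apply Subtype.ext
  push_cast [cwedge_val _ _ ha ha]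
  exact ExteriorAlgebra.ι_sq_zero _

lemma cwedge_swap {a b : ℂ} (ha : a ≠ 0) (hb : b ≠ 0) : cwedge b a = - cwedge a b := by
  apply Subtype.ext
  push_cast [cwedge_val _ _ ha hb, cwedge_val _ _ hb ha]
  exact eq_neg_of_add_eq_zero_left (ExteriorAlgebra.ι_add_mul_swap _ _)

lemma cwedge_div_left {a b c : ℂ} (ha : a ≠ 0) (hb : b ≠ 0) (hc : c ≠ 0) :
    cwedge (a / b) c = cwedge a c - cwedge b c := by
  have h := cwedge_mul_left (div_ne_zero ha hb) hb hc
  rw [div_mul_cancel₀ _ hb] at h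
  rw [h]; abel

lemma cwedge_div_right {a b c : ℂ} (ha : a ≠ 0) (hb : b ≠ 0) (hc : c ≠ 0) :
    cwedge a (b / c) = cwedge a b - cwedge a c := by
  have h := cwedge_mul_right ha (div_ne_zero hb hc) hc
  rw [div_mul_cancel₀ _ hc] at h
  rw [h]; abel

/-- the Dehn invariant `ν(z) = z ∧ (1-z)` vanishes on the five-term
relation, hence is well defined on the pre-Bloch group `𝒫(ℂ)`. -/
theorem dehn_invariant_five_term (x y : ℂ)
    (hx0 : x ≠ 0) (hx1 : x ≠ 1) (hy0 : y ≠ 0) (hy1 : y ≠ 1) (hxy : x ≠ y) :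
    dehnNu x - dehnNu y + dehnNu (y / x)
      - dehnNu ((1 - x⁻¹) / (1 - y⁻¹)) + dehnNu ((1 - x) / (1 - y)) = 0 := by
  have hc : (1 : ℂ) - x ≠ 0 := sub_ne_zero.mpr (Ne.symm hx1)
  have hd : (1 : ℂ) - y ≠ 0 := sub_ne_zero.mpr (Ne.symm hy1)
  have he : x - y ≠ 0 := sub_ne_zero.mpr hxy
  have h1 : 1 - y / x = (x - y) / x := by field_simp
  have h1y : (1:ℂ) - y⁻¹ ≠ 0 := by
    rw [sub_ne_zero]; intro h; exact hy1 (by rwa [eq_comm, inv_eq_one] at h)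
  have h2 : (1 - x⁻¹) / (1 - y⁻¹) = (y * (1 - x)) / (x * (1 - y)) := by
    rw [div_eq_div_iff h1y (mul_ne_zero hx0 hd)]
    field_simp
    ring
  have h3 : 1 - (y * (1 - x)) / (x * (1 - y)) = (x - y) / (x * (1 - y)) := by
    field_simp; ring
  have h4 : 1 - (1 - x) / (1 - y) = (x - y) / (1 - y) := by field_simp; ring
  simp only [dehnNu, h1, h2, h3, h4]
  simp only [cwedge_div_left, cwedge_div_right, cwedge_mul_left, cwedge_mul_right,
    hx0, hy0, hc, hd, he, mul_ne_zero_iff, div_ne_zero_iff, ne_eq, not_false_iff,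
    and_self, true_and, and_true]
  rw [cwedge_self hx0, cwedge_self hd, cwedge_swap hx0 hc, cwedge_swap hx0 hd]
  abel
end

section
/- The abelian group ⋀²_ℤ(ℂˣ) is uniquely divisible: for every positive integer k and every element w ∈ ⋀²_ℤ(ℂˣ) there exists a unique v ∈ ⋀²_ℤ(ℂˣ) with k·v = w. Equivalently, ⋀²_ℤ(ℂˣ) carries the structure of a ℚ-vector space. -/
namespace ExtSqAux

open ExteriorAlgebra

local notation "A" => Additive ℂˣ

/-- `ℂˣ` is divisible: every element has `k`-th roots. -/
lemma nsmul_surj {k : ℕ} (hk : k ≠ 0) (a : A) : ∃ c : A, k • c = a := by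
  set z : ℂˣ := Additive.toMul a
  have hz : ((z : ℂ) ^ ((k : ℂ)⁻¹)) ^ k = (z : ℂ) := Complex.cpow_nat_inv_pow _ hk
  have hw : ((z : ℂ) ^ ((k : ℂ)⁻¹)) ≠ 0 := by
    intro h0
    rw [h0, zero_pow hk] at hz
    exact z.ne_zero hz.symm
  refine ⟨Additive.ofMul (Units.mk0 _ hw), ?_⟩
  apply Additive.toMul.injective
  ext
  simpa using hz

/-- The torsion submodule of `Additive ℂˣ`. -/
noncomputable def T : Submodule ℤ A := Submodule.torsion ℤ A

lemma mem_T_iff {x : A} : x ∈ T ↔ ∃ n : ℕ, n ≠ 0 ∧ n • x = 0 := by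
  constructor
  · rintro ⟨⟨n, hn⟩, h⟩
    refine ⟨n.natAbs, by simpa using nonZeroDivisors.ne_zero hn, ?_⟩
    have : ((n.natAbs : ℤ)) • x = 0 ∨ (-(n.natAbs : ℤ)) • x = 0 := by
      rcases Int.natAbs_eq n with h' | h'
      · left; rw [← h']; exact h
      · right; rw [← h']; exact h
    rcases this with h' | h'
    · simpa using h'
    · rw [neg_smul, neg_eq_zero] at h'
      simpa using h'
  · rintro ⟨n, hn, h⟩
    refine ⟨⟨(n : ℤ), mem_nonZeroDivisors_of_ne_zero (by exact_mod_cast hn)⟩, ?_⟩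
    simpa using h

noncomputable instance : DivisibleBy (↥T) ℕ := by
  apply divisibleByOfSMulRightSurj
  rintro n hn ⟨t, ht⟩
  obtain ⟨c, hc⟩ := nsmul_surj hn t
  obtain ⟨m, hm, hmt⟩ := mem_T_iff.mp ht
  have hcT : c ∈ T := by
    refine mem_T_iff.mpr ⟨m * n, mul_ne_zero hm hn, ?_⟩
    rw [mul_smul, hc, hmt]
  exact ⟨⟨c, hcT⟩, Subtype.ext hc⟩

noncomputable instance : DivisibleBy (↥T) ℤ :=
  AddGroup.divisibleByIntOfDivisibleByNat _

/-- A retraction `r : Additive ℂˣ → T` with `r ∘ inclusion = id`, obtained from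
injectivity of the divisible group `T`. -/
noncomputable def rData : { r : A →ₗ[ℤ] ↥T // ∀ x : ↥T, r ↑x = x } := by
  have hinj : Module.Injective ℤ ↥T := (Module.Baer.of_divisible ↥T).injective
  have := hinj.out (T.subtype) (Submodule.injective_subtype T) LinearMap.id
  exact ⟨this.choose, this.choose_spec⟩

noncomputable def r : A →ₗ[ℤ] ↥T := rData.1

lemma r_coe (x : ↥T) : r ↑x = x := rData.2 x

/-- The projection onto a torsion-free complement. -/
noncomputable def p : A →ₗ[ℤ] A := LinearMap.id - T.subtype ∘ₗ r

lemma p_apply (a : A) : p a = a - ↑(r a) := rfl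

lemma p_of_mem {x : A} (hx : x ∈ T) : p x = 0 := by
  have : r x = ⟨x, hx⟩ := r_coe ⟨x, hx⟩
  rw [p_apply, this]
  simp

lemma r_p (a : A) : r (p a) = 0 := by
  rw [p_apply, map_sub]
  rw [r_coe (r a)]
  simp

lemma p_p (a : A) : p (p a) = p a := by
  rw [p_apply (p a), r_p]
  simp

lemma sub_p_mem (a : A) : a - p a ∈ T := by
  rw [p_apply]
  simp only [sub_sub_cancel]
  exact (r a).2

/-- Range of `p` is torsion-free. -/
lemma p_torsion_free {k : ℕ} (hk : k ≠ 0) {a : A} (h : k • p a = 0) : p a = 0 := by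
  have hT : p a ∈ T := mem_T_iff.mpr ⟨k, hk, h⟩
  have := p_of_mem hT
  rwa [p_p] at this

variable {k : ℕ}

/-- The division map on the range of `p`. -/
noncomputable def dEquiv (hk : k ≠ 0) :
    (LinearMap.range p) ≃ₗ[ℤ] (LinearMap.range p) := by
  refine LinearEquiv.ofBijective ((k : ℤ) • LinearMap.id) ⟨?_, ?_⟩
  · intro x y hxy
    simp only [LinearMap.smul_apply, LinearMap.id_apply] at hxy
    have : (k : ℤ) • (x - y) = 0 := by rw [smul_sub, hxy, sub_self]
    obtain ⟨a, ha⟩ := (x - y).2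
    have ha' : p a = (x : A) - (y : A) := by rw [ha]; simp
    have hx : k • ((x : A) - (y : A)) = 0 := by
      have := congrArg (Subtype.val) this
      simpa using this
    have : (x : A) - (y : A) = 0 := by
      rw [← ha'] at hx ⊢
      exact p_torsion_free hk hx
    have : x - y = 0 := Subtype.ext (by simpa using this)
    exact sub_eq_zero.mp this
  · rintro ⟨x, a, rfl⟩
    obtain ⟨c, hc⟩ := nsmul_surj hk a
    refine ⟨⟨p c, ⟨c, rfl⟩⟩, Subtype.ext ?_⟩
    simp only [LinearMap.smul_apply, LinearMap.id_apply]
    show (k : ℤ) • p c = p a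
    rw [← hc, map_nsmul]
    simp

/-- `d` is a linear map with `k • d a = p a`. -/
noncomputable def d (hk : k ≠ 0) : A →ₗ[ℤ] A :=
  (LinearMap.range p).subtype ∘ₗ (dEquiv hk).symm.toLinearMap ∘ₗ p.rangeRestrict

lemma k_smul_d (hk : k ≠ 0) (a : A) : k • d hk a = p a := by
  have : (dEquiv hk) ((dEquiv hk).symm (p.rangeRestrict a)) = p.rangeRestrict a :=
    (dEquiv hk).apply_symm_apply _
  have h2 := congrArg (Subtype.val) this
  show k • ((LinearMap.range p).subtype ((dEquiv hk).symm (p.rangeRestrict a))) = p a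
  rw [Submodule.coe_subtype]
  calc k • ((dEquiv hk).symm (p.rangeRestrict a) : A)
      = ((k : ℤ) • ((dEquiv hk).symm (p.rangeRestrict a)) : (LinearMap.range p)) := by
        simp
    _ = p a := by
        rw [show ((k : ℤ) • ((dEquiv hk).symm (p.rangeRestrict a)) : (LinearMap.range p))
            = (dEquiv hk) ((dEquiv hk).symm (p.rangeRestrict a)) from rfl]
        rw [this]
        rfl

/-! ### Wedge computations in the exterior algebra -/

local notation "E" => ExteriorAlgebra ℤ A

lemma wedge_torsion_left {x : A} (hx : x ∈ T) (y : A) :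
    ExteriorAlgebra.ι ℤ x * ExteriorAlgebra.ι ℤ y = (0 : E) := by
  obtain ⟨n, hn, hnx⟩ := mem_T_iff.mp hx
  obtain ⟨c, hc⟩ := nsmul_surj hn y
  calc ExteriorAlgebra.ι ℤ x * ExteriorAlgebra.ι ℤ y
      = ExteriorAlgebra.ι ℤ x * (n • ExteriorAlgebra.ι ℤ c) := by rw [← map_nsmul, hc]
    _ = (n • ExteriorAlgebra.ι ℤ x) * ExteriorAlgebra.ι ℤ c := by
        rw [mul_smul_comm, smul_mul_assoc]
    _ = ExteriorAlgebra.ι ℤ (n • x) * ExteriorAlgebra.ι ℤ c := by rw [map_nsmul]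
    _ = 0 := by rw [hnx, map_zero, zero_mul]

lemma wedge_torsion_right (y : A) {x : A} (hx : x ∈ T) :
    ExteriorAlgebra.ι ℤ y * ExteriorAlgebra.ι ℤ x = (0 : E) := by
  obtain ⟨n, hn, hnx⟩ := mem_T_iff.mp hx
  obtain ⟨c, hc⟩ := nsmul_surj hn y
  calc ExteriorAlgebra.ι ℤ y * ExteriorAlgebra.ι ℤ x
      = (n • ExteriorAlgebra.ι ℤ c) * ExteriorAlgebra.ι ℤ x := by rw [← map_nsmul, hc]
    _ = ExteriorAlgebra.ι ℤ c * (n • ExteriorAlgebra.ι ℤ x) := by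
        rw [mul_smul_comm, smul_mul_assoc]
    _ = ExteriorAlgebra.ι ℤ c * ExteriorAlgebra.ι ℤ (n • x) := by rw [map_nsmul]
    _ = 0 := by rw [hnx, map_zero, mul_zero]

lemma wedge_p (a b : A) :
    ExteriorAlgebra.ι ℤ (p a) * ExteriorAlgebra.ι ℤ (p b) =
      ExteriorAlgebra.ι ℤ a * ExteriorAlgebra.ι ℤ b := by
  have ha : a = (a - p a) + p a := by abel
  have hb : b = (b - p b) + p b := by abel
  conv_rhs => rw [ha, hb]
  rw [map_add, map_add, add_mul, mul_add, mul_add]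
  rw [wedge_torsion_left (sub_p_mem a) _, wedge_torsion_left (sub_p_mem a) _,
    wedge_torsion_right _ (sub_p_mem b)]
  simp

lemma ιMulti_two (v : Fin 2 → A) :
    ExteriorAlgebra.ιMulti ℤ 2 v =
      ExteriorAlgebra.ι ℤ (v 0) * ExteriorAlgebra.ι ℤ (v 1) := by
  rw [ExteriorAlgebra.ιMulti_succ_apply, ExteriorAlgebra.ιMulti_succ_apply,
    ExteriorAlgebra.ιMulti_zero_apply, mul_one]
  rfl

lemma wedge_mem (x y : A) :
    ExteriorAlgebra.ι ℤ x * ExteriorAlgebra.ι ℤ y ∈ ⋀[ℤ]^2 A := by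
  rw [show (⋀[ℤ]^2 A) = (LinearMap.range (ExteriorAlgebra.ι ℤ (M := A))) ^ 2 from rfl,
    pow_two]
  exact Submodule.mul_mem_mul ⟨x, rfl⟩ ⟨y, rfl⟩

/-- The key identity: on the second exterior power, `ExteriorAlgebra.map (d hk)` is a
two-sided inverse of multiplication by `k ^ 2`. -/
lemma main (hk : k ≠ 0) {x : E} (hx : x ∈ ⋀[ℤ]^2 A) :
    ExteriorAlgebra.map (d hk) x ∈ ⋀[ℤ]^2 A ∧
      (k ^ 2) • ExteriorAlgebra.map (d hk) x = x := by
  rw [← ExteriorAlgebra.ιMulti_span_fixedDegree] at hx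
  induction hx using Submodule.span_induction with
  | mem z hz =>
      obtain ⟨v, rfl⟩ := hz
      rw [ιMulti_two, map_mul, ExteriorAlgebra.map_apply_ι, ExteriorAlgebra.map_apply_ι]
      refine ⟨wedge_mem _ _, ?_⟩
      calc (k ^ 2) • (ExteriorAlgebra.ι ℤ (d hk (v 0)) * ExteriorAlgebra.ι ℤ (d hk (v 1)))
          = (k • ExteriorAlgebra.ι ℤ (d hk (v 0))) *
              (k • ExteriorAlgebra.ι ℤ (d hk (v 1))) := by
            rw [smul_mul_assoc, mul_smul_comm, ← smul_assoc]
            congr 1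
            rw [smul_eq_mul, pow_two]
        _ = ExteriorAlgebra.ι ℤ (k • d hk (v 0)) * ExteriorAlgebra.ι ℤ (k • d hk (v 1)) := by
            rw [map_nsmul, map_nsmul]
        _ = ExteriorAlgebra.ι ℤ (p (v 0)) * ExteriorAlgebra.ι ℤ (p (v 1)) := by
            rw [k_smul_d, k_smul_d]
        _ = ExteriorAlgebra.ι ℤ (v 0) * ExteriorAlgebra.ι ℤ (v 1) := wedge_p _ _
  | zero => simp
  | add y z _ _ hy hz =>
      refine ⟨by rw [map_add]; exact Submodule.add_mem _ hy.1 hz.1, ?_⟩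
      rw [map_add, smul_add, hy.2, hz.2]
  | smul n y _ hy =>
      refine ⟨by rw [map_smul]; exact Submodule.smul_mem _ _ hy.1, ?_⟩
      rw [map_smul, smul_comm, hy.2]

end ExtSqAux

/-- `⋀²_ℤ(ℂˣ)` is uniquely divisible: for every positive integer `k`
and every `w` there is a unique `v` with `k • v = w`. Equivalently, it is a
`ℚ`-vector space. -/
theorem exteriorSquare_units_complex_uniquely_divisible (k : ℕ) (hk : 0 < k)
    (w : ⋀[ℤ]^2 (Additive ℂˣ)) :
    ∃! v : ⋀[ℤ]^2 (Additive ℂˣ), k • v = w := by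
  have hk' : k ≠ 0 := hk.ne'
  obtain ⟨hm, hid⟩ := ExtSqAux.main hk' w.2
  refine ⟨k • ⟨ExteriorAlgebra.map (ExtSqAux.d hk') ↑w, hm⟩, ?_, ?_⟩
  · apply Subtype.ext
    push_cast
    rw [smul_smul, ← pow_two]
    exact hid
  · intro v hv
    -- k • (v - v₀) = 0 where v₀ is our solution; show torsion-freeness
    have hveq : ∀ u : ⋀[ℤ]^2 (Additive ℂˣ), k • u = 0 → u = 0 := by
      intro u hu
      obtain ⟨hm', hid'⟩ := ExtSqAux.main hk' u.2
      have hcoe : k • (u : ExteriorAlgebra ℤ (Additive ℂˣ)) = 0 := by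
        have := congrArg Subtype.val hu
        simpa using this
      have : ExteriorAlgebra.map (ExtSqAux.d hk') (k • (u : ExteriorAlgebra ℤ (Additive ℂˣ)))
          = 0 := by rw [hcoe, map_zero]
      rw [map_nsmul] at this
      have : (k ^ 2) • ExteriorAlgebra.map (ExtSqAux.d hk') (u : ExteriorAlgebra ℤ (Additive ℂˣ))
          = 0 := by
        rw [pow_two, mul_smul, this, smul_zero]
      rw [hid'] at this
      exact Subtype.ext (by simpa using this)
    have h0 : k • (v - k • ⟨ExteriorAlgebra.map (ExtSqAux.d hk') ↑w, hm⟩) = 0 := by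
      rw [smul_sub, hv, smul_comm]
      have : k • (⟨ExteriorAlgebra.map (ExtSqAux.d hk') ↑w, hm⟩ :
          ⋀[ℤ]^2 (Additive ℂˣ)) = k • ⟨ExteriorAlgebra.map (ExtSqAux.d hk') ↑w, hm⟩ := rfl
      rw [show (k • (k • (⟨ExteriorAlgebra.map (ExtSqAux.d hk') ↑w, hm⟩ :
          ⋀[ℤ]^2 (Additive ℂˣ)))) = w from ?_, sub_self]
      apply Subtype.ext
      push_cast
      rw [smul_smul, ← pow_two]
      exact hid
    have := hveq _ h0
    rwa [sub_eq_zero] at this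
end

section
/- Let m, l, x, y be nonzero complex numbers satisfying the two Ptolemy relations of the standard two-tetrahedron triangulation of the figure-eight knot complement: m⁴·l·x² + m⁴·l·x·y − m⁴·y² = 0 and −y² + m⁴·l·x² − m²·x·y = 0. Then the SL(2,ℂ) A-polynomial of the figure-eight knot vanishes at (m,l), i.e. m⁸l − m⁶l − m⁴ − 2m⁴l − m⁴l² − m²l + l = 0, and moreover m²(1 + m²l)·x = (m⁴ − 1)·y. -/
/-- any nonzero solution `(m, l, x, y)` of the two Ptolemy relations of
the standard two-tetrahedron triangulation of the figure-eight knot complement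
satisfies the `SL(2,ℂ)` A-polynomial of the figure-eight knot, and moreover
`m²(1 + m²l)x = (m⁴ - 1)y`. -/
theorem figure_eight_A_polynomial (m l x y : ℂ)
    (hm : m ≠ 0) (hl : l ≠ 0) (hx : x ≠ 0) (hy : y ≠ 0)
    (h1 : m ^ 4 * l * x ^ 2 + m ^ 4 * l * x * y - m ^ 4 * y ^ 2 = 0)
    (h2 : -y ^ 2 + m ^ 4 * l * x ^ 2 - m ^ 2 * x * y = 0) :
    m ^ 8 * l - m ^ 6 * l - m ^ 4 - 2 * m ^ 4 * l - m ^ 4 * l ^ 2 - m ^ 2 * l + l = 0 ∧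
      m ^ 2 * (1 + m ^ 2 * l) * x = (m ^ 4 - 1) * y := by
  have key : m ^ 2 * (1 + m ^ 2 * l) * x = (m ^ 4 - 1) * y := by
    have h : y * (m ^ 2 * (1 + m ^ 2 * l) * x) = y * ((m ^ 4 - 1) * y) := by
      linear_combination h1 - h2
    exact mul_left_cancel₀ hy h
  refine ⟨?_, key⟩
  have hy2 : (m ^ 4 * y ^ 2 : ℂ) ≠ 0 := by
    exact mul_ne_zero (pow_ne_zero 4 hm) (pow_ne_zero 2 hy)
  have h : m ^ 4 * y ^ 2 *
      (m ^ 8 * l - m ^ 6 * l - m ^ 4 - 2 * m ^ 4 * l - m ^ 4 * l ^ 2 - m ^ 2 * l + l) =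
      m ^ 4 * y ^ 2 * 0 := by
    linear_combination (m ^ 2 * (1 + m ^ 2 * l)) ^ 2 * h2 +
      (m ^ 2 * (m ^ 2 * (1 + m ^ 2 * l)) * y -
        m ^ 4 * l * ((m ^ 4 - 1) * y + m ^ 2 * (1 + m ^ 2 * l) * x)) * key
  exact mul_left_cancel₀ hy2 h
end

section
/- Let u, m, l be nonzero complex numbers. Then in ⋀²_ℤ(ℂˣ): u⁻¹ ∧ (−m²·l·u) + (l·u²·m⁻²) ∧ (l·u) = −2·(m ∧ l). In particular, for the figure-eight knot complement with shapes z₁ = x/y and z₂ = (l′/m′²)(y/x)² satisfying 1−z₁ = −m′²l′(y/x) and 1−z₂ = l′(y/x), the Dehn invariant z₁∧(1−z₁) + z₂∧(1−z₂) equals −2·m′∧l′. -/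
noncomputable def W (a b : ℂˣ) : ⋀[ℤ]^2 (Additive ℂˣ) :=
  ⟨ExteriorAlgebra.ιMulti ℤ 2 ![Additive.ofMul a, Additive.ofMul b],
    ExteriorAlgebra.ιMulti_range ℤ 2 ⟨_, rfl⟩⟩

lemma cwedge_eq (a b : ℂ) (ha : a ≠ 0) (hb : b ≠ 0) :
    cwedge a b = W (Units.mk0 a ha) (Units.mk0 b hb) := by
  rw [cwedge, dif_pos ⟨ha, hb⟩]; rfl

lemma upd0 {α : Type*} (x y z : α) : Function.update ![x, y] 0 z = ![z, y] := by
  ext i; fin_cases i <;> simp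

lemma upd1 {α : Type*} (x y z : α) : Function.update ![x, y] 1 z = ![x, z] := by
  ext i; fin_cases i <;> simp

lemma W_mul_left (a b c : ℂˣ) : W (a * b) c = W a c + W b c := by
  apply Subtype.ext
  have h := (ExteriorAlgebra.ιMulti ℤ 2 (M := Additive ℂˣ)).map_update_add
    ![Additive.ofMul a, Additive.ofMul c] 0 (Additive.ofMul a) (Additive.ofMul b)
  simp only [upd0] at h
  simpa [W] using h

lemma W_mul_right (a b c : ℂˣ) : W a (b * c) = W a b + W a c := by
  apply Subtype.ext
  have h := (ExteriorAlgebra.ιMulti ℤ 2 (M := Additive ℂˣ)).map_update_add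
    ![Additive.ofMul a, Additive.ofMul b] 1 (Additive.ofMul b) (Additive.ofMul c)
  simp only [upd1] at h
  simpa [W] using h

lemma W_self (a : ℂˣ) : W a a = 0 := by
  apply Subtype.ext
  have h := (ExteriorAlgebra.ιMulti ℤ 2 (M := Additive ℂˣ)).map_eq_zero_of_eq
    ![Additive.ofMul a, Additive.ofMul a] (i := 0) (j := 1) rfl (by decide)
  simpa [W] using h

lemma W_one_left (b : ℂˣ) : W 1 b = 0 := by
  have h := W_mul_left 1 1 b
  rw [one_mul] at h
  have h2 := congrArg (fun x => x - W 1 b) h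
  simpa using h2.symm

lemma W_one_right (a : ℂˣ) : W a 1 = 0 := by
  have h := W_mul_right a 1 1
  rw [one_mul] at h
  have h2 := congrArg (fun x => x - W a 1) h
  simpa using h2.symm

lemma W_inv_left (a b : ℂˣ) : W a⁻¹ b = -W a b := by
  have h := W_mul_left a a⁻¹ b
  rw [mul_inv_cancel, W_one_left] at h
  exact eq_neg_of_add_eq_zero_right h.symm

lemma W_inv_right (a b : ℂˣ) : W a b⁻¹ = -W a b := by
  have h := W_mul_right a b b⁻¹
  rw [mul_inv_cancel, W_one_right] at h
  exact eq_neg_of_add_eq_zero_right h.symm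

lemma W_comm (a b : ℂˣ) : W a b = -W b a := by
  have h := W_self (a * b)
  rw [W_mul_left, W_mul_right, W_mul_right, W_self, W_self] at h
  have h2 : W a b + W b a = 0 := by
    rw [← h]; abel
  exact eq_neg_of_add_eq_zero_left h2

lemma W_neg_one_right (a : ℂˣ) : W a (-1) = 0 := by
  obtain ⟨s, hs⟩ : ∃ s : ℂ, s ^ 2 = ((a : ℂˣ) : ℂ) :=
    ⟨((a : ℂˣ) : ℂ) ^ (((2 : ℕ) : ℂ))⁻¹, by
      simpa using Complex.cpow_nat_inv_pow ((a : ℂˣ) : ℂ) two_ne_zero⟩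
  have hs0 : s ≠ 0 := by
    intro h0; rw [h0] at hs; simp at hs; exact a.ne_zero hs.symm
  set S : ℂˣ := Units.mk0 s hs0
  have haS : a = S * S := by
    ext; rw [← hs]; simp [S, sq]
  have h2 : ((-1 : ℂˣ) * (-1 : ℂˣ)) = 1 := by ext; simp
  have := W_mul_right S (-1) (-1)
  rw [h2, W_one_right] at this
  have hS : W S (-1) + W S (-1) = 0 := this.symm
  rw [haS, W_mul_left]
  rw [← hS]

lemma W_neg_right (a b : ℂˣ) : W a (-b) = W a b := by
  have : (-b : ℂˣ) = (-1) * b := by ext; simp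
  rw [this, W_mul_right, W_neg_one_right, zero_add]

/-- the Dehn invariant computation for the two-tetrahedron triangulation
of the figure-eight knot complement: for nonzero `u, m, l`,
`u⁻¹ ∧ (-m²lu) + (lu²m⁻²) ∧ (lu) = -2 (m ∧ l)` in `⋀²_ℤ(ℂˣ)`. -/
theorem figure_eight_dehn_invariant (u m l : ℂ) (hu : u ≠ 0) (hm : m ≠ 0) (hl : l ≠ 0) :
    cwedge u⁻¹ (-(m ^ 2 * l * u)) + cwedge (l * u ^ 2 * (m ^ 2)⁻¹) (l * u) =
      -((2 : ℤ) • cwedge m l) := by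
  set U : ℂˣ := Units.mk0 u hu
  set M : ℂˣ := Units.mk0 m hm
  set L : ℂˣ := Units.mk0 l hl
  have h1 : u⁻¹ ≠ 0 := inv_ne_zero hu
  have h2 : -(m ^ 2 * l * u) ≠ 0 :=
    neg_ne_zero.mpr (mul_ne_zero (mul_ne_zero (pow_ne_zero 2 hm) hl) hu)
  have h3 : l * u ^ 2 * (m ^ 2)⁻¹ ≠ 0 :=
    mul_ne_zero (mul_ne_zero hl (pow_ne_zero 2 hu)) (inv_ne_zero (pow_ne_zero 2 hm))
  have h4 : l * u ≠ 0 := mul_ne_zero hl hu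
  rw [cwedge_eq _ _ h1 h2, cwedge_eq _ _ h3 h4, cwedge_eq _ _ hm hl]
  have e1 : Units.mk0 u⁻¹ h1 = U⁻¹ := by ext; simp [U]
  have e2 : Units.mk0 (-(m ^ 2 * l * u)) h2 = -(M * M * L * U) := by
    ext
    simp only [Units.val_neg, Units.val_mul, Units.val_mk0, U, M, L]
    ring
  have e3 : Units.mk0 (l * u ^ 2 * (m ^ 2)⁻¹) h3 = L * (U * U) * (M * M)⁻¹ := by
    ext
    simp only [Units.val_mul, Units.val_inv_eq_inv_val, Units.val_mk0, U, M, L]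
    ring
  have e4 : Units.mk0 (l * u) h4 = L * U := by ext; simp [U, L]
  have e5 : Units.mk0 m hm = M := rfl
  have e6 : Units.mk0 l hl = L := rfl
  rw [e1, e2, e3, e4, e5, e6]
  rw [W_neg_right, W_inv_left]
  simp only [W_mul_left, W_mul_right, W_inv_left, W_self, neg_add_rev]
  have c1 : W M U = -W U M := W_comm M U
  have c2 : W L U = -W U L := W_comm L U
  rw [c1, c2]
  abel
end

section
/- Let G be a group and let a, b, c ∈ G satisfy the face-pairing relations c·a⁻¹·b·c⁻¹·a = 1 and a·b⁻¹·c⁻¹·b = 1. Define x₁ = c and x₂ = a·b⁻¹. Then x₁ and x₂ satisfy the two-bridge relation x₁·w = w·x₂, where w = x₂·x₁⁻¹·x₂⁻¹·x₁. -/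
/-- if `a, b, c` satisfy the face-pairing relations of the standard
triangulation of the figure-eight knot complement, then `x₁ = c` and `x₂ = a b⁻¹`
satisfy the two-bridge relation `x₁ w = w x₂` with `w = x₂ x₁⁻¹ x₂⁻¹ x₁`. -/
theorem face_pairing_to_two_bridge {G : Type*} [Group G] (a b c : G)
    (h1 : c * a⁻¹ * b * c⁻¹ * a = 1) (h2 : a * b⁻¹ * c⁻¹ * b = 1)
    (x₁ x₂ : G) (hx₁ : x₁ = c) (hx₂ : x₂ = a * b⁻¹) :
    x₁ * (x₂ * x₁⁻¹ * x₂⁻¹ * x₁) = (x₂ * x₁⁻¹ * x₂⁻¹ * x₁) * x₂ := by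
  have hc : c = b * a * b⁻¹ := by
    calc c = b * (a * b⁻¹ * c⁻¹ * b)⁻¹ * a * b⁻¹ := by group
      _ = b * a * b⁻¹ := by rw [h2]; group
  rw [hc] at h1
  have hk : b * a * b⁻¹ * a⁻¹ * b = a⁻¹ * (b * a * b⁻¹) := by
    calc b * a * b⁻¹ * a⁻¹ * b
        = (b * a * b⁻¹ * a⁻¹ * b * (b * a * b⁻¹)⁻¹ * a) * (a⁻¹ * (b * a * b⁻¹)) := by group
      _ = a⁻¹ * (b * a * b⁻¹) := by rw [h1]; group
  rw [hx₁, hx₂, hc]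
  calc (b * a * b⁻¹) * ((a * b⁻¹) * (b * a * b⁻¹)⁻¹ * (a * b⁻¹)⁻¹ * (b * a * b⁻¹))
      = (b * a * b⁻¹ * a⁻¹ * b) * (a * b⁻¹) := by group
    _ = (a⁻¹ * (b * a * b⁻¹)) * (a * b⁻¹) := by rw [hk]
    _ = ((a * b⁻¹) * (b * a * b⁻¹)⁻¹ * (a * b⁻¹)⁻¹ * (b * a * b⁻¹)) * (a * b⁻¹) := by group
end
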